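/- Let ℬ and 𝒞 be disjoint sets of letters and let w be a nonempty word over ℬ ∪ 𝒞 such that u = π_ℬ(w) is nonempty; let v = π_𝒞(w) and let u₁ be the first letter of u. Then the word u₁·v (the concatenation of the single letter u₁ with v) is a subword of w if and only if the first letter of w equals u₁. -/

import Mathlib

/-- Let `B` and `C` be disjoint sets of letters and `w` a nonempty word over `B ∪ C`
whose projection `u = π_B(w)` is nonempty; let `v = π_C(w)` and let `u₁` be the first
letter of `u`. Then `u₁ · v` is a subword of `w` if and only if the first letter of `w`
is `u₁`. -/
theorem head_proj_cons_sublist_iff {α : Type*} [DecidableEq α] (B C : Finset α)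
    (hBC : Disjoint B C) (w : List α) (hw : w ≠ [])
    (hmem : ∀ x ∈ w, x ∈ B ∪ C)
    (hu : w.filter (fun x => decide (x ∈ B)) ≠ []) :
    List.Sublist
        ((w.filter (fun x => decide (x ∈ B))).head hu ::
          w.filter (fun x => decide (x ∈ C))) w ↔
      w.head hw = (w.filter (fun x => decide (x ∈ B))).head hu := by
  obtain ⟨a, t, rfl⟩ := List.exists_cons_of_ne_nil hw
  have ha : a ∈ B ∪ C := hmem a List.mem_cons_self
  set u₁ := ((a :: t).filter (fun x => decide (x ∈ B))).head hu with hu₁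
  have hu₁B : u₁ ∈ B := by
    have := List.head_mem hu
    rw [List.mem_filter] at this
    exact of_decide_eq_true this.2
  have hu₁C : u₁ ∉ C := fun h => Finset.disjoint_left.mp hBC hu₁B h
  simp only [List.head_cons]
  constructor
  · intro hsub
    by_contra hne
    have haB : a ∉ B := by
      intro haB
      apply hne
      have hf : (a :: t).filter (fun x => decide (x ∈ B))
          = a :: t.filter (fun x => decide (x ∈ B)) :=
        List.filter_cons_of_pos (by simpa)
      simp [hu₁, hf]
    have haC : a ∈ C := by
      rcases Finset.mem_union.mp ha with h | h
      · exact absurd h haB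
      · exact h
    have hne' : u₁ ≠ a := fun h => hu₁C (h ▸ haC)
    have hfc : (a :: t).filter (fun x => decide (x ∈ C))
        = a :: t.filter (fun x => decide (x ∈ C)) :=
      List.filter_cons_of_pos (by simpa)
    rw [hfc] at hsub
    rcases List.sublist_cons_iff.mp hsub with h | ⟨r, hr, _⟩
    · have := h.filter (fun x => decide (x ∈ C))
      rw [List.filter_cons_of_neg (by simpa), List.filter_cons_of_pos (by simpa),
        List.filter_filter] at this
      have hlen := this.length_le
      simp only [List.length_cons] at hlen
      have : (t.filter (fun a => decide (a ∈ C) && decide (a ∈ C))).length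
          = (t.filter (fun x => decide (x ∈ C))).length := by
        congr 1
        apply List.filter_congr
        intro x _
        simp
      omega
    · injection hr with h1 _
      exact hne' h1
  · intro h
    have haC : a ∉ C := h ▸ hu₁C
    rw [List.filter_cons_of_neg (by simpa), ← h]
    exact (List.filter_sublist : List.Sublist (t.filter (fun x => decide (x ∈ C))) t).cons₂ a
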